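/- Let M = [[A, B], [Bᴴ, C]] be a positive semidefinite (m+n)×(m+n) complex matrix with m×m top-left block A, and suppose rank(M) = rank(A). Then there exists an m×n complex matrix Z such that B = A·Z and C = Zᴴ·A·Z; that is, every flat PSD block matrix is exactly the flat extension of its top-left block. -/

import Mathlib

open Matrix
open scoped ComplexOrder

private lemma col_factor {m n p : ℕ} (X : Matrix (Fin m ⊕ Fin n) (Fin p) ℂ)
    (Y : Matrix (Fin m ⊕ Fin n) (Fin n) ℂ)
    (h : LinearMap.range Y.mulVecLin ≤ LinearMap.range X.mulVecLin) :
    ∃ W : Matrix (Fin p) (Fin n) ℂ, Y = X * W := by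
  have hcol : ∀ j : Fin n, ∃ w : Fin p → ℂ, X.mulVec w = fun i => Y i j := by
    intro j
    have : (fun i => Y i j) ∈ LinearMap.range Y.mulVecLin := by
      refine ⟨Pi.single j 1, ?_⟩
      ext i
      simp [Matrix.mulVecLin_apply, Matrix.mulVec_single]
    exact h this
  choose w hw using hcol
  refine ⟨fun k j => w j k, ?_⟩
  ext i j
  have := congrFun (hw j) i
  show Y i j = ∑ k, X i k * w j k
  simpa [Matrix.mulVec, Matrix.mul_apply, dotProduct] using this.symm

/-- A PSD block matrix `M = [[A, B], [Bᴴ, C]]` with `rank M = rank A`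
is exactly the flat extension of its top-left block: there is `Z` with `B = A·Z` and
`C = Zᴴ·A·Z`. -/
theorem flat_psd_block_is_flat_extension {m n : ℕ}
    (A : Matrix (Fin m) (Fin m) ℂ) (B : Matrix (Fin m) (Fin n) ℂ)
    (C : Matrix (Fin n) (Fin n) ℂ)
    (hpsd : (Matrix.fromBlocks A B Bᴴ C).PosSemidef)
    (hflat : (Matrix.fromBlocks A B Bᴴ C).rank = A.rank) :
    ∃ Z : Matrix (Fin m) (Fin n) ℂ, B = A * Z ∧ C = Zᴴ * A * Z := by
  obtain ⟨N, hN⟩ : ∃ N : Matrix (Fin m ⊕ Fin n) (Fin m ⊕ Fin n) ℂ,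
      Matrix.fromBlocks A B Bᴴ C = Nᴴ * N := by
    open scoped MatrixOrder in
    exact ⟨CFC.sqrt (Matrix.fromBlocks A B Bᴴ C), by
      rw [(nonneg_iff_posSemidef.mp (CFC.sqrt_nonneg _)).isHermitian.eq,
        CFC.sqrt_mul_sqrt_self _ (nonneg_iff_posSemidef.mpr hpsd)]⟩
  set X : Matrix (Fin m ⊕ Fin n) (Fin m) ℂ := N.submatrix id Sum.inl with hX
  set Y : Matrix (Fin m ⊕ Fin n) (Fin n) ℂ := N.submatrix id Sum.inr with hY
  have hA : A = Xᴴ * X := by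
    ext i j
    have := congrFun (congrFun hN (Sum.inl i)) (Sum.inl j)
    simpa [Matrix.fromBlocks, Matrix.mul_apply, Matrix.conjTranspose_apply, hX] using this
  have hB : B = Xᴴ * Y := by
    ext i j
    have := congrFun (congrFun hN (Sum.inl i)) (Sum.inr j)
    simpa [Matrix.fromBlocks, Matrix.mul_apply, Matrix.conjTranspose_apply, hX, hY] using this
  have hC : C = Yᴴ * Y := by
    ext i j
    have := congrFun (congrFun hN (Sum.inr i)) (Sum.inr j)
    simpa [Matrix.fromBlocks, Matrix.mul_apply, Matrix.conjTranspose_apply, hX, hY] using this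
  -- ranks
  have hXv : ∀ v : Fin m → ℂ, X.mulVec v = N.mulVec (Sum.elim v 0) := by
    intro v; ext i
    simp [Matrix.mulVec, dotProduct, Fintype.sum_sum_type, hX]
  have hYv : ∀ v : Fin n → ℂ, Y.mulVec v = N.mulVec (Sum.elim 0 v) := by
    intro v; ext i
    simp [Matrix.mulVec, dotProduct, Fintype.sum_sum_type, hY]
  have hle : LinearMap.range X.mulVecLin ≤ LinearMap.range N.mulVecLin := by
    rintro _ ⟨v, rfl⟩
    exact ⟨Sum.elim v 0, (hXv v).symm⟩
  have hrank : X.rank = N.rank := by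
    have h1 : (Xᴴ * X).rank = X.rank := Matrix.rank_conjTranspose_mul_self X
    have h2 : (Nᴴ * N).rank = N.rank := Matrix.rank_conjTranspose_mul_self N
    rw [← hA] at h1
    rw [← hN] at h2
    rw [← h1, ← h2, hflat]
  have hrangeeq : LinearMap.range X.mulVecLin = LinearMap.range N.mulVecLin :=
    Submodule.eq_of_le_of_finrank_eq hle hrank
  have hleY : LinearMap.range Y.mulVecLin ≤ LinearMap.range X.mulVecLin := by
    rintro _ ⟨v, rfl⟩
    rw [hrangeeq]
    exact ⟨Sum.elim 0 v, (hYv v).symm⟩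
  obtain ⟨W, hW⟩ := col_factor X Y hleY
  refine ⟨W, ?_, ?_⟩
  · rw [hB, hW, hA, Matrix.mul_assoc]
  · rw [hC, hW, hA, Matrix.conjTranspose_mul, Matrix.mul_assoc, Matrix.mul_assoc,
      Matrix.mul_assoc]
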